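/- arXiv:1011.3317 — 2 statements merged into one kernel-verified Lean document; each statement's English description precedes it below -/
import Mathlib

section
/- For every W ∈ 𝔇_n, the matrix I_n − W is invertible and Ω := i(I_n + W)(I_n − W)^{-1} belongs to the Siegel upper half space ℌ_n, i.e. Ω is symmetric and Im Ω is positive definite. -/
open Matrix
open scoped ComplexOrder

/-- Entrywise complex conjugate of a matrix. -/
def cm {n : ℕ} (W : Matrix (Fin n) (Fin n) ℂ) : Matrix (Fin n) (Fin n) ℂ :=
  W.map (starRingEnd ℂ)

/-- Entrywise imaginary part of a complex matrix, as a real matrix. -/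
def imM {n : ℕ} (Ω : Matrix (Fin n) (Fin n) ℂ) : Matrix (Fin n) (Fin n) ℝ :=
  Matrix.of fun i j => (Ω i j).im

/-- The Siegel disk `𝔇_n`. -/
def SiegelDisk (n : ℕ) : Set (Matrix (Fin n) (Fin n) ℂ) :=
  {W | W.IsSymm ∧ (1 - W * cm W).PosDef}

/-- The Siegel upper half space `ℌ_n`: symmetric matrices with positive definite
imaginary part. -/
def SiegelHalf (n : ℕ) : Set (Matrix (Fin n) (Fin n) ℂ) :=
  {Ω | Ω.IsSymm ∧ (imM Ω).PosDef}

lemma cm_mul {n : ℕ} (M N : Matrix (Fin n) (Fin n) ℂ) : cm (M * N) = cm M * cm N :=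
  Matrix.map_mul

lemma cm_one {n : ℕ} : cm (1 : Matrix (Fin n) (Fin n) ℂ) = 1 :=
  Matrix.map_one _ (map_zero _) (map_one _)

lemma cm_sub {n : ℕ} (M N : Matrix (Fin n) (Fin n) ℂ) : cm (M - N) = cm M - cm N := by
  ext i j; simp [cm, Matrix.map_apply]

lemma cm_add {n : ℕ} (M N : Matrix (Fin n) (Fin n) ℂ) : cm (M + N) = cm M + cm N := by
  ext i j; simp [cm, Matrix.map_apply]

lemma pd_conj {n : ℕ} {M B : Matrix (Fin n) (Fin n) ℂ} (hM : M.PosDef)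
    (hB : IsUnit B.det) : (Bᴴ * M * B).PosDef := by
  refine Matrix.PosDef.of_dotProduct_mulVec_pos (Matrix.isHermitian_conjTranspose_mul_mul B hM.1) fun x hx => ?_
  have hBx : B *ᵥ x ≠ 0 := by
    intro h
    apply hx
    have := congrArg (fun y => B⁻¹ *ᵥ y) h
    simpa [Matrix.mulVec_mulVec, Matrix.nonsing_inv_mul B hB] using this
  simpa only [Matrix.star_mulVec, Matrix.dotProduct_mulVec, Matrix.vecMul_vecMul] using
    hM.dotProduct_mulVec_pos hBx

/-- For `W ∈ 𝔇_n`, `I − W` is invertible and `Ω = i(I+W)(I−W)⁻¹ ∈ ℌ_n`. -/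
theorem stmt4 (n : ℕ) (W : Matrix (Fin n) (Fin n) ℂ) (hW : W ∈ SiegelDisk n) :
    IsUnit (1 - W) ∧ Complex.I • ((1 + W) * (1 - W)⁻¹) ∈ SiegelHalf n := by
  obtain ⟨hsym, hpd⟩ := hW
  -- Step 1: invertibility of 1 - W
  have hdet : IsUnit (1 - W).det := by
    rw [isUnit_iff_ne_zero]
    intro h0
    obtain ⟨v, hvne, hv⟩ := (Matrix.exists_mulVec_eq_zero_iff).mpr h0
    have hWv : W *ᵥ v = v := by
      rw [Matrix.sub_mulVec, Matrix.one_mulVec, sub_eq_zero] at hv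
      exact hv.symm
    have hcm : cm W *ᵥ star v = star v := by
      funext i
      have h1 : (cm W *ᵥ star v) i = star ((W *ᵥ v) i) := by
        simp [cm, Matrix.mulVec, dotProduct, Matrix.map_apply, map_sum]
      rw [h1, hWv]
      rfl
    have hpos := hpd.dotProduct_mulVec_pos (star_ne_zero.mpr hvne)
    have hform : star (star v) ⬝ᵥ ((1 - W * cm W) *ᵥ star v) = 0 := by
      rw [star_star, Matrix.sub_mulVec, Matrix.one_mulVec, ← Matrix.mulVec_mulVec, hcm,
        dotProduct_sub, Matrix.dotProduct_mulVec, ← Matrix.mulVec_transpose, hsym, hWv, sub_self]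
    rw [hform] at hpos
    exact lt_irrefl _ hpos
  have hUnit : IsUnit (1 - W) := (Matrix.isUnit_iff_isUnit_det _).mpr hdet
  refine ⟨hUnit, ?_⟩
  set A : Matrix (Fin n) (Fin n) ℂ := (1 - W)⁻¹ with hA
  set V : Matrix (Fin n) (Fin n) ℂ := cm W with hV
  set B : Matrix (Fin n) (Fin n) ℂ := cm A with hB
  have hAl : (1 - W) * A = 1 := Matrix.mul_nonsing_inv _ hdet
  have hAr : A * (1 - W) = 1 := Matrix.nonsing_inv_mul _ hdet
  have hBl : (1 - V) * B = 1 := by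
    have h := congrArg cm hAl
    rwa [cm_mul, cm_sub, cm_one] at h
  have hBr : B * (1 - V) = 1 := by
    have h := congrArg cm hAr
    rwa [cm_mul, cm_sub, cm_one] at h
  have hTsub : (1 - W)ᵀ = 1 - W := by rw [Matrix.transpose_sub, Matrix.transpose_one, hsym]
  have hAsymm : Aᵀ = A := by rw [hA, Matrix.transpose_nonsing_inv, hTsub]
  have hAapp : ∀ i j, A j i = A i j := fun i j => congrFun (congrFun hAsymm i) j
  have hVsymm : Vᵀ = V := by
    rw [hV]
    ext i j
    simp only [cm, Matrix.map_apply, Matrix.transpose_apply]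
    rw [hsym.apply]
  -- commutation
  have hc : (1 + W) * A = A * (1 + W) := by
    have h1 : (1 - W) * ((1 + W) * A) = 1 + W := by
      rw [← mul_assoc, show (1 - W) * (1 + W) = (1 + W) * (1 - W) by noncomm_ring, mul_assoc,
        hAl, mul_one]
    calc (1 + W) * A = (A * (1 - W)) * ((1 + W) * A) := by rw [hAr, one_mul]
      _ = A * ((1 - W) * ((1 + W) * A)) := by rw [mul_assoc]
      _ = A * (1 + W) := by rw [h1]
  have hcV : (1 + V) * B = B * (1 + V) := by
    have h1 : (1 - V) * ((1 + V) * B) = 1 + V := by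
      rw [← mul_assoc, show (1 - V) * (1 + V) = (1 + V) * (1 - V) by noncomm_ring, mul_assoc,
        hBl, mul_one]
    calc (1 + V) * B = (B * (1 - V)) * ((1 + V) * B) := by rw [hBr, one_mul]
      _ = B * ((1 - V) * ((1 + V) * B)) := by rw [mul_assoc]
      _ = B * (1 + V) := by rw [h1]
  have hΩsym : (Complex.I • ((1 + W) * A))ᵀ = Complex.I • ((1 + W) * A) := by
    rw [Matrix.transpose_smul, Matrix.transpose_mul, hAsymm, Matrix.transpose_add,
      Matrix.transpose_one, hsym, ← hc]
  refine ⟨hΩsym, ?_⟩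
  -- PosDef of imM Ω
  set N : Matrix (Fin n) (Fin n) ℂ := B * (1 - V * W) * A with hN
  have hBAH : B = Aᴴ := by
    ext i j
    simp only [hB, cm, Matrix.map_apply, Matrix.conjTranspose_apply, hAapp i j]
    rfl
  have hpdT : (1 - V * W).PosDef := by
    have h : (1 - V * W) = (1 - W * V)ᵀ := by
      rw [Matrix.transpose_sub, Matrix.transpose_one, Matrix.transpose_mul, hVsymm, hsym]
    rw [h]
    exact hpd.transpose
  have hAdet : IsUnit A.det := Matrix.isUnit_nonsing_inv_det _ hdet
  have hNpd : N.PosDef := by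
    rw [hN, hBAH]
    exact pd_conj hpdT hAdet
  have hcmprod : cm ((1 + W) * A) = (1 + V) * B := by
    rw [cm_mul, cm_add, cm_one]
  have hkey : (1 + W) * A + (1 + V) * B = N + N := by
    have e1 : (1 + W) * A = B * ((1 - V) * (1 + W)) * A := by
      rw [← mul_assoc, hBr, one_mul]
    have e2 : (1 + V) * B = B * ((1 + V) * (1 - W)) * A := by
      rw [hcV, mul_assoc, mul_assoc, hAl, mul_one]
    have e3 : (1 - V) * (1 + W) + (1 + V) * (1 - W) = (1 - V * W) + (1 - V * W) := by
      noncomm_ring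
    calc (1 + W) * A + (1 + V) * B
        = B * ((1 - V) * (1 + W)) * A + B * ((1 + V) * (1 - W)) * A := by rw [← e1, ← e2]
      _ = B * ((1 - V) * (1 + W) + (1 + V) * (1 - W)) * A := by noncomm_ring
      _ = B * ((1 - V * W) + (1 - V * W)) * A := by rw [e3]
      _ = N + N := by rw [hN]; noncomm_ring
  have hNval : ∀ i j, N i j = (((Complex.I • ((1 + W) * A)) i j).im : ℂ) := by
    intro i j
    have h1 := congrFun (congrFun hkey i) j
    have h2 : ((1 + V) * B) i j = (starRingEnd ℂ) (((1 + W) * A) i j) := by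
      rw [← hcmprod]; rfl
    simp only [Matrix.add_apply, h2] at h1
    set z := ((1 + W) * A) i j with hz
    have h3 := Complex.add_conj z
    rw [h1] at h3
    push_cast at h3
    have h5 : N i j = (z.re : ℂ) := by linear_combination h3 / 2
    rw [h5]
    congr 1
    simp [Matrix.smul_apply, ← hz, Complex.mul_im]
  refine Matrix.PosDef.of_dotProduct_mulVec_pos ?_ ?_
  · -- IsHermitian of imM Ω over ℝ
    ext i j
    rw [Matrix.conjTranspose_apply, star_trivial]
    exact congrArg Complex.im (congrFun (congrFun hΩsym i) j)
  · intro x hx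
    set xC : Fin n → ℂ := fun i => (x i : ℂ) with hxC
    have hxCne : xC ≠ 0 := by
      intro h
      apply hx
      funext i
      simpa [hxC] using congrFun h i
    have hstar : star xC = xC := by
      funext i
      simp [hxC, Pi.star_apply, Complex.conj_ofReal]
    have hNx := hNpd.dotProduct_mulVec_pos hxCne
    rw [hstar] at hNx
    have hcast : xC ⬝ᵥ (N *ᵥ xC) =
        ((x ⬝ᵥ (imM (Complex.I • ((1 + W) * A)) *ᵥ x) : ℝ) : ℂ) := by
      simp only [dotProduct, Matrix.mulVec, imM, Matrix.of_apply, hxC]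
      push_cast
      refine Finset.sum_congr rfl fun i _ => ?_
      rw [Finset.mul_sum, Finset.mul_sum]
      refine Finset.sum_congr rfl fun j _ => ?_
      rw [hNval i j]
    rw [hcast] at hNx
    exact Complex.zero_lt_real.mp hNx
end

section
/- The partial Cayley transform φ(W,z) = (i(I_n + W)(I_n − W)^{-1}, 2i·z·(I_n − W)^{-1}) is a well-defined bijection from 𝔇_n × ℂⁿ onto ℌ_n × ℂⁿ, with inverse given by Ω ↦ W = (Ω − iI_n)(Ω + iI_n)^{-1} and ζ ↦ z = ζ·(Ω + iI_n)^{-1}; in particular, for every Ω ∈ ℌ_n the matrix Ω + iI_n is invertible and (Ω − iI_n)(Ω + iI_n)^{-1} ∈ 𝔇_n, and the two maps are mutually inverse. -/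
open Matrix
open scoped ComplexOrder

/-- The partial Cayley transform
`φ(W,z) = (i(I+W)(I−W)⁻¹, 2i·z·(I−W)⁻¹)` on `𝔇_n × ℂⁿ` (rows as `Fin n → ℂ`). -/
noncomputable def cayley {n : ℕ} (x : Matrix (Fin n) (Fin n) ℂ × (Fin n → ℂ)) :
    Matrix (Fin n) (Fin n) ℂ × (Fin n → ℂ) :=
  (Complex.I • ((1 + x.1) * (1 - x.1)⁻¹), (2 * Complex.I) • (x.2 ᵥ* (1 - x.1)⁻¹))

/-- The inverse partial Cayley transform
`(Ω,ζ) ↦ ((Ω − iI)(Ω + iI)⁻¹, ζ·(Ω + iI)⁻¹)` on `ℌ_n × ℂⁿ`. -/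
noncomputable def cayleyInv {n : ℕ} (y : Matrix (Fin n) (Fin n) ℂ × (Fin n → ℂ)) :
    Matrix (Fin n) (Fin n) ℂ × (Fin n → ℂ) :=
  ((y.1 - Complex.I • (1 : Matrix (Fin n) (Fin n) ℂ)) *
      (y.1 + Complex.I • (1 : Matrix (Fin n) (Fin n) ℂ))⁻¹,
    y.2 ᵥ* (y.1 + Complex.I • (1 : Matrix (Fin n) (Fin n) ℂ))⁻¹)

namespace SiegelAux
variable {n : ℕ}
local notation "Mat" => Matrix (Fin n) (Fin n) ℂ

lemma cm_mul (A B : Mat) : cm (A * B) = cm A * cm B := by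
  ext i j; simp [cm, Matrix.mul_apply, map_sum]

lemma cm_one : cm (1 : Mat) = 1 := by
  ext i j; by_cases h : i = j <;> simp [cm, Matrix.one_apply, h]

lemma cm_add (A B : Mat) : cm (A + B) = cm A + cm B := by ext i j; simp [cm]
lemma cm_sub (A B : Mat) : cm (A - B) = cm A - cm B := by ext i j; simp [cm]
lemma cm_smul (c : ℂ) (A : Mat) : cm (c • A) = (starRingEnd ℂ c) • cm A := by
  ext i j; simp [cm]
lemma cm_cm (A : Mat) : cm (cm A) = A := by ext i j; simp [cm]
lemma cm_transpose (A : Mat) : (cm A)ᵀ = cm Aᵀ := by ext i j; simp [cm]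

lemma cm_eq_conjTranspose {A : Mat} (h : A.IsSymm) : cm A = Aᴴ := by
  ext i j
  have h' : A j i = A i j := congrFun (congrFun h i) j
  simp [cm, Matrix.conjTranspose_apply, h']

lemma cm_mulVec_star (A : Mat) (x : Fin n → ℂ) : cm A *ᵥ star x = star (A *ᵥ x) := by
  funext i
  simp [cm, Matrix.mulVec, dotProduct, map_sum, mul_comm]

def cx {n : ℕ} (a : Fin n → ℝ) : Fin n → ℂ := fun i => (a i : ℂ)

lemma dot_cx (A : Matrix (Fin n) (Fin n) ℝ) (a b : Fin n → ℝ) :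
    cx a ⬝ᵥ (A.map (Complex.ofReal)) *ᵥ cx b = ((a ⬝ᵥ A *ᵥ b : ℝ) : ℂ) := by
  simp [cx, dotProduct, Matrix.mulVec, Matrix.map_apply, Finset.mul_sum]

lemma imM_map (Ω : Mat) :
    (imM Ω).map (Complex.ofReal) = (2 * Complex.I)⁻¹ • (Ω - cm Ω) := by
  ext i j
  simp only [Matrix.map_apply, imM, cm, Matrix.smul_apply, Matrix.sub_apply, Matrix.of_apply,
    smul_eq_mul]
  rw [Complex.sub_conj]
  have : Complex.I ≠ 0 := Complex.I_ne_zero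
  field_simp
  push_cast
  ring


lemma posDef_map {A : Matrix (Fin n) (Fin n) ℝ} (hA : A.PosDef) :
    (A.map (Complex.ofReal)).PosDef := by
  have hsym : ∀ i j, A j i = A i j := by
    intro i j
    have h := congrFun (congrFun hA.1 i) j
    simpa [Matrix.conjTranspose_apply] using h
  have hAT : Aᵀ = A := by ext i j; exact hsym i j
  rw [Matrix.posDef_iff_dotProduct_mulVec]
  constructor
  · ext i j
    simp only [Matrix.conjTranspose_apply, Matrix.map_apply, Complex.star_def,
      Complex.conj_ofReal, Complex.ofReal_inj]
    exact hsym i j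
  · intro x hx
    set a : Fin n → ℝ := fun i => (x i).re with ha
    set b : Fin n → ℝ := fun i => (x i).im with hb
    have hxab : x = cx a + Complex.I • cx b := by
      funext i
      simp [cx, ha, hb, Complex.ext_iff]
    have hstar : star x = cx a - Complex.I • cx b := by
      funext i
      simp [cx, ha, hb, Complex.ext_iff]
    have hswap : a ⬝ᵥ A *ᵥ b = b ⬝ᵥ A *ᵥ a := by
      rw [Matrix.dotProduct_mulVec]
      conv_lhs => rw [← hAT]
      rw [Matrix.vecMul_transpose, dotProduct_comm]
    have hcalc : star x ⬝ᵥ (A.map Complex.ofReal) *ᵥ x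
        = ((a ⬝ᵥ A *ᵥ a + b ⬝ᵥ A *ᵥ b : ℝ) : ℂ) := by
      rw [hstar, hxab]
      simp only [Matrix.mulVec_add, Matrix.mulVec_smul, sub_dotProduct, dotProduct_add,
        dotProduct_smul, smul_dotProduct, dot_cx, smul_eq_mul]
      rw [hswap]
      push_cast
      linear_combination (-((b ⬝ᵥ A *ᵥ b : ℝ) : ℂ)) * Complex.I_sq
    rw [hcalc, Complex.zero_lt_real]
    have hab : a ≠ 0 ∨ b ≠ 0 := by
      by_contra h
      push_neg at h
      apply hx
      funext i
      have h1 : a i = 0 := by rw [h.1]; rfl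
      have h2 : b i = 0 := by rw [h.2]; rfl
      apply Complex.ext
      · simpa [ha] using h1
      · simpa [hb] using h2
    have hstar_a : star a = a := funext fun i => star_trivial _
    have hstar_b : star b = b := funext fun i => star_trivial _
    rcases hab with h | h
    · have h1 := hA.dotProduct_mulVec_pos h
      have h2 := hA.posSemidef.dotProduct_mulVec_nonneg b
      rw [hstar_a] at h1; rw [hstar_b] at h2
      linarith
    · have h1 := hA.dotProduct_mulVec_pos h
      have h2 := hA.posSemidef.dotProduct_mulVec_nonneg a
      rw [hstar_b] at h1; rw [hstar_a] at h2
      linarith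

lemma posDef_of_map {A : Matrix (Fin n) (Fin n) ℝ}
    (h : (A.map (Complex.ofReal)).PosDef) : A.PosDef := by
  rw [Matrix.posDef_iff_dotProduct_mulVec]
  constructor
  · ext i j
    have h1 := congrFun (congrFun h.1 i) j
    simp only [Matrix.conjTranspose_apply, Matrix.map_apply, Complex.star_def,
      Complex.conj_ofReal, Complex.ofReal_inj] at h1
    simpa [Matrix.conjTranspose_apply] using h1
  · intro x hx
    have hx' : cx x ≠ 0 := by
      intro hc
      apply hx
      funext i
      have := congrFun hc i
      simpa [cx] using this
    have h2 := h.dotProduct_mulVec_pos hx'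
    have hst : star (cx x) = cx x := by
      funext i; simp [cx]
    rw [hst, dot_cx] at h2
    have hsx : star x = x := funext fun i => star_trivial _
    rw [hsx]
    exact Complex.zero_lt_real.mp h2

lemma posDef_sandwich {D S B : Mat} (hD : D.PosDef) (hBS : B * S = 1) :
    (Sᴴ * D * S).PosDef := by
  rw [Matrix.posDef_iff_dotProduct_mulVec]
  constructor
  · show (Sᴴ * D * S)ᴴ = _
    rw [Matrix.conjTranspose_mul, Matrix.conjTranspose_mul,
      Matrix.conjTranspose_conjTranspose, hD.1, ← Matrix.mul_assoc]
  · intro x hx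
    have hy : S *ᵥ x ≠ 0 := by
      intro h0
      apply hx
      have h1 : x = (B * S) *ᵥ x := by rw [hBS, Matrix.one_mulVec]
      rw [← Matrix.mulVec_mulVec, h0, Matrix.mulVec_zero] at h1
      exact h1
    have key : star x ⬝ᵥ (Sᴴ * D * S) *ᵥ x = star (S *ᵥ x) ⬝ᵥ D *ᵥ (S *ᵥ x) := by
      rw [Matrix.star_mulVec, Matrix.mul_assoc, ← Matrix.mulVec_mulVec,
        Matrix.dotProduct_mulVec, Matrix.mulVec_mulVec]
    rw [key]
    exact hD.dotProduct_mulVec_pos hy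

lemma posDef_four_smul {M : Mat} (h : M.PosDef) : ((4:ℂ) • M).PosDef := by
  have h4 : (4:ℂ) • M = M + M + M + M := by
    rw [show (4:ℂ) = 1+1+1+1 by norm_num]
    simp [add_smul]
  rw [h4]
  exact ((h.add h).add h).add h

lemma comm_inv {A B : Mat} (h : A * B = B * A) (hA : IsUnit A.det) :
    A⁻¹ * B = B * A⁻¹ := by
  have h1 := Matrix.mul_nonsing_inv A hA
  have h2 := Matrix.nonsing_inv_mul A hA
  calc A⁻¹ * B = A⁻¹ * B * (A * A⁻¹) := by rw [h1, Matrix.mul_one]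
    _ = A⁻¹ * (B * A) * A⁻¹ := by simp only [Matrix.mul_assoc]
    _ = A⁻¹ * (A * B) * A⁻¹ := by rw [h]
    _ = (A⁻¹ * A) * (B * A⁻¹) := by simp only [Matrix.mul_assoc]
    _ = B * A⁻¹ := by rw [h2, Matrix.one_mul]

lemma dot_self_pos {x : Fin n → ℂ} (hx : x ≠ 0) : 0 < star x ⬝ᵥ x := by
  have h := Matrix.PosDef.one (n := Fin n) (R := ℂ) |>.dotProduct_mulVec_pos hx
  rwa [Matrix.one_mulVec] at h

lemma unit_one_sub {W : Mat} (hs : W.IsSymm) (hp : (1 - W * cm W).PosDef) :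
    IsUnit (1 - W) := by
  rw [Matrix.isUnit_iff_isUnit_det, isUnit_iff_ne_zero]
  intro hdet
  obtain ⟨x, hx0, hx⟩ := Matrix.exists_mulVec_eq_zero_iff.mpr hdet
  rw [Matrix.sub_mulVec, Matrix.one_mulVec, sub_eq_zero] at hx
  -- hx : x = W *ᵥ x
  set y := star x with hy
  have hy0 : y ≠ 0 := star_ne_zero.mpr hx0
  have hWy : cm W *ᵥ y = y := by rw [hy, cm_mulVec_star, ← hx]
  have hkey : star y ⬝ᵥ ((1 - W * cm W) *ᵥ y) = 0 := by
    rw [Matrix.sub_mulVec, Matrix.one_mulVec, ← Matrix.mulVec_mulVec, hWy, dotProduct_sub]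
    have hsy : star y = x := by rw [hy, star_star]
    have hxW : x ᵥ* W = x := by
      conv_lhs => rw [← hs]
      rw [Matrix.vecMul_transpose, ← hx]
    have h2 : star y ⬝ᵥ (W *ᵥ y) = star y ⬝ᵥ y := by
      rw [Matrix.dotProduct_mulVec, hsy, hxW]
    rw [h2, sub_self]
  have := hp.dotProduct_mulVec_pos hy0
  rw [hkey] at this
  exact lt_irrefl 0 this

lemma Kpos {Ω : Mat} (hp : (imM Ω).PosDef) :
    ((2 * Complex.I)⁻¹ • (Ω - cm Ω)).PosDef := by
  rw [← imM_map]
  exact posDef_map hp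

lemma unit_add_smul {Ω : Mat} (hs : Ω.IsSymm) (hp : (imM Ω).PosDef) :
    IsUnit (Ω + Complex.I • (1 : Mat)) := by
  have hK := Kpos hp
  rw [Matrix.isUnit_iff_isUnit_det, isUnit_iff_ne_zero]
  intro hdet
  obtain ⟨x, hx0, hx⟩ := Matrix.exists_mulVec_eq_zero_iff.mpr hdet
  rw [Matrix.add_mulVec, Matrix.smul_mulVec, Matrix.one_mulVec] at hx
  have hΩx : Ω *ᵥ x = -(Complex.I • x) := eq_neg_of_add_eq_zero_left hx
  set t := star x ⬝ᵥ x with ht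
  have ht0 : 0 < t := dot_self_pos hx0
  have hval : star x ⬝ᵥ ((2 * Complex.I)⁻¹ • (Ω - cm Ω)) *ᵥ x = -t := by
    rw [Matrix.smul_mulVec, dotProduct_smul, Matrix.sub_mulVec, dotProduct_sub]
    have e1 : star x ⬝ᵥ Ω *ᵥ x = -(Complex.I * t) := by
      rw [hΩx, dotProduct_neg, dotProduct_smul, smul_eq_mul, ht]
    have e2 : star x ⬝ᵥ cm Ω *ᵥ x = Complex.I * t := by
      rw [cm_eq_conjTranspose hs, Matrix.dotProduct_mulVec, ← Matrix.star_mulVec, hΩx]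
      have : star (-(Complex.I • x)) = Complex.I • star x := by
        rw [star_neg, star_smul]
        simp [Complex.star_def]
      rw [this, smul_dotProduct, smul_eq_mul, ht]
    rw [e1, e2, smul_eq_mul]
    have hI : Complex.I ≠ 0 := Complex.I_ne_zero
    field_simp
    ring
  have := hK.dotProduct_mulVec_pos hx0
  rw [hval] at this
  have : (0:ℂ) < 0 := by
    calc (0:ℂ) < t := ht0
    _ = t + 0 := by ring
    _ < t + -t := by exact add_lt_add_right this t
    _ = 0 := by ring
  exact lt_irrefl 0 this

lemma half_mem {W : Mat} (hs : W.IsSymm) (hp : (1 - W * cm W).PosDef) :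
    (Complex.I • ((1 + W) * (1 - W)⁻¹)).IsSymm ∧
    (imM (Complex.I • ((1 + W) * (1 - W)⁻¹))).PosDef := by
  have hud : IsUnit (1 - W).det :=
    (Matrix.isUnit_iff_isUnit_det _).mp (unit_one_sub hs hp)
  set S := (1 - W)⁻¹ with hSdef
  have hS1 : (1 - W) * S = 1 := Matrix.mul_nonsing_inv _ hud
  have hS2 : S * (1 - W) = 1 := Matrix.nonsing_inv_mul _ hud
  have hSsymm : S.IsSymm := by
    show Sᵀ = S
    rw [hSdef, Matrix.transpose_nonsing_inv, Matrix.transpose_sub, Matrix.transpose_one, hs]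
  have hc : (1 - W) * (1 + W) = (1 + W) * (1 - W) := by noncomm_ring
  have hcomm : S * (1 + W) = (1 + W) * S := comm_inv hc hud
  set Wb := cm W with hWbdef
  set Sb := cm S with hSbdef
  have hSb1 : (1 - Wb) * Sb = 1 := by
    have := congrArg cm hS1
    rw [cm_mul, cm_sub, cm_one] at this
    exact this
  have hSb2 : Sb * (1 - Wb) = 1 := by
    have := congrArg cm hS2
    rw [cm_mul, cm_sub, cm_one] at this
    exact this
  have hcommb : Sb * (1 + Wb) = (1 + Wb) * Sb := by
    have := congrArg cm hcomm
    rwa [cm_mul, cm_mul, cm_add, cm_one] at this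
  have hSH : Sᴴ = Sb := (cm_eq_conjTranspose hSsymm).symm
  -- symmetry of Ω
  have hΩsymm : (Complex.I • ((1 + W) * S)).IsSymm := by
    show (Complex.I • ((1 + W) * S))ᵀ = _
    rw [Matrix.transpose_smul, Matrix.transpose_mul, Matrix.transpose_add,
      Matrix.transpose_one, hs, hSsymm, hcomm]
  refine ⟨hΩsymm, ?_⟩
  -- cm Ω
  have hcmΩ : cm (Complex.I • ((1 + W) * S)) = (-Complex.I) • ((1 + Wb) * Sb) := by
    rw [cm_smul, cm_mul, cm_add, cm_one]
    simp [Complex.star_def]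
    rfl
  -- eq1 : Ω - cm Ω = I • G
  set G := (1 + W) * S + (1 + Wb) * Sb with hGdef
  have heq1 : Complex.I • ((1 + W) * S) - cm (Complex.I • ((1 + W) * S))
      = Complex.I • G := by
    rw [hcmΩ, hGdef, neg_smul, sub_neg_eq_add, smul_add]
  -- term identities
  have t1 : Sb * ((1 - Wb) * (1 + W)) * S = (1 + W) * S := by
    rw [← Matrix.mul_assoc, hSb2, Matrix.one_mul]
  have t2 : Sb * ((1 + Wb) * (1 - W)) * S = (1 + Wb) * Sb := by
    rw [Matrix.mul_assoc, Matrix.mul_assoc, hS1, Matrix.mul_one, hcommb]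
  set D := 1 - Wb * W with hDdef
  have hsum : (1 - Wb) * (1 + W) + (1 + Wb) * (1 - W) = (2:ℂ) • D := by
    rw [hDdef, two_smul]
    noncomm_ring
  have heq2 : G = Sb * ((2:ℂ) • D) * S := by
    rw [← hsum, Matrix.mul_add, Matrix.add_mul, t1, t2, hGdef]
  -- conclude
  have hKform : (2 * Complex.I)⁻¹ • (Complex.I • ((1 + W) * S)
      - cm (Complex.I • ((1 + W) * S))) = Sᴴ * D * S := by
    rw [heq1, heq2, hSH]
    rw [mul_smul_comm, smul_mul_assoc, smul_smul, smul_smul]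
    have h1 : (2 * Complex.I)⁻¹ * Complex.I * 2 = 1 := by
      have hI : Complex.I ≠ 0 := Complex.I_ne_zero
      field_simp
    rw [h1, one_smul]
  have hDpos : D.PosDef := by
    have ht := hp.transpose
    have : (1 - W * cm W)ᵀ = D := by
      rw [Matrix.transpose_sub, Matrix.transpose_one, Matrix.transpose_mul,
        cm_transpose, hs, hDdef, hWbdef]
    rwa [this] at ht
  apply posDef_of_map
  rw [imM_map, hKform]
  exact posDef_sandwich hDpos hS1

lemma disk_mem {Ω : Mat} (hs : Ω.IsSymm) (hp : (imM Ω).PosDef) :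
    ((Ω - Complex.I • (1 : Mat)) * (Ω + Complex.I • (1 : Mat))⁻¹).IsSymm ∧
    (1 - ((Ω - Complex.I • (1 : Mat)) * (Ω + Complex.I • (1 : Mat))⁻¹) *
      cm ((Ω - Complex.I • (1 : Mat)) * (Ω + Complex.I • (1 : Mat))⁻¹)).PosDef := by
  have hud : IsUnit (Ω + Complex.I • (1 : Mat)).det :=
    (Matrix.isUnit_iff_isUnit_det _).mp (unit_add_smul hs hp)
  set P := Ω + Complex.I • (1 : Mat) with hPdef
  set Q := Ω - Complex.I • (1 : Mat) with hQdef
  set T := P⁻¹ with hTdef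
  have hT1 : P * T = 1 := Matrix.mul_nonsing_inv _ hud
  have hT2 : T * P = 1 := Matrix.nonsing_inv_mul _ hud
  have hPs : P.IsSymm := by
    show Pᵀ = P
    rw [hPdef, Matrix.transpose_add, Matrix.transpose_smul, Matrix.transpose_one, hs]
  have hQs : Qᵀ = Q := by
    rw [hQdef, Matrix.transpose_sub, Matrix.transpose_smul, Matrix.transpose_one, hs]
  have hTs : T.IsSymm := by
    show Tᵀ = T
    rw [hTdef, Matrix.transpose_nonsing_inv, hPs]
  have hPQ : P * Q = Q * P := by
    rw [hPdef, hQdef]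
    simp only [mul_sub, sub_mul, mul_add, add_mul, smul_mul_assoc, mul_smul_comm,
      Matrix.mul_one, Matrix.one_mul]
    module
  have hcomm : T * Q = Q * T := comm_inv hPQ hud
  -- symmetry of W'
  have hW's : (Q * T).IsSymm := by
    show (Q * T)ᵀ = Q * T
    rw [Matrix.transpose_mul, hTs, hQs, hcomm]
  refine ⟨hW's, ?_⟩
  -- conjugates
  set Ωb := cm Ω with hΩbdef
  have hcmP : cm P = Ωb - Complex.I • (1 : Mat) := by
    rw [hPdef, cm_add, cm_smul, cm_one]
    simp [Complex.star_def, sub_eq_add_neg]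
    rfl
  have hcmQ : cm Q = Ωb + Complex.I • (1 : Mat) := by
    rw [hQdef, cm_sub, cm_smul, cm_one]
    simp [Complex.star_def, sub_eq_add_neg]
    rfl
  set Pb := Ωb - Complex.I • (1 : Mat) with hPbdef
  set Qb := Ωb + Complex.I • (1 : Mat) with hQbdef
  set Tb := cm T with hTbdef
  have hTb1 : Pb * Tb = 1 := by
    have := congrArg cm hT1
    rw [cm_mul, cm_one, hcmP] at this
    exact this
  have hTb2 : Tb * Pb = 1 := by
    have := congrArg cm hT2
    rw [cm_mul, cm_one, hcmP] at this
    exact this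
  have hcmW' : cm (Q * T) = Qb * Tb := by rw [cm_mul, hcmQ]
  -- key algebra
  have hA1 : P * (Q * T) = Q := by
    rw [← hcomm, ← Matrix.mul_assoc, hT1, Matrix.one_mul]
  have hA2 : (Qb * Tb) * Pb = Qb := by
    rw [Matrix.mul_assoc, hTb2, Matrix.mul_one]
  set X := 1 - (Q * T) * cm (Q * T) with hXdef
  have e1 : P * X = P - Q * (Qb * Tb) := by
    rw [hXdef, Matrix.mul_sub, Matrix.mul_one, hcmW', ← Matrix.mul_assoc, hA1]
  have hE : P * X * Pb = P * Pb - Q * Qb := by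
    rw [e1, Matrix.sub_mul, Matrix.mul_assoc, hA2]
  set K := (2 * Complex.I)⁻¹ • (Ω - Ωb) with hKdef
  have hexp : P * Pb - Q * Qb = (2 * Complex.I) • (Ωb - Ω) := by
    rw [hPdef, hPbdef, hQdef, hQbdef]
    simp only [mul_sub, sub_mul, mul_add, add_mul, smul_mul_assoc, mul_smul_comm,
      Matrix.mul_one, Matrix.one_mul, smul_smul]
    module
  have hscal : (2 * Complex.I) • (Ωb - Ω) = (4:ℂ) • K := by
    rw [hKdef, smul_smul]
    have h4 : (4:ℂ) * (2 * Complex.I)⁻¹ = -(2 * Complex.I) := by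
      rw [mul_inv, Complex.inv_I]
      ring
    rw [h4]
    module
  have hfin : X = Tbᴴ * ((4:ℂ) • K) * Tb := by
    have hTbH : Tbᴴ = T := by
      have hTbs : Tb.IsSymm := by
        show Tbᵀ = Tb
        rw [hTbdef, cm_transpose, hTs]
      rw [← cm_eq_conjTranspose hTbs, hTbdef, cm_cm]
    rw [hTbH]
    calc X = (T * P) * X * (Pb * Tb) := by rw [hT2, hTb1, Matrix.one_mul, Matrix.mul_one]
      _ = T * (P * X * Pb) * Tb := by simp only [Matrix.mul_assoc]
      _ = T * ((4:ℂ) • K) * Tb := by rw [hE, hexp, hscal]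
  have hKpos : K.PosDef := Kpos hp
  rw [hfin]
  exact posDef_sandwich (posDef_four_smul hKpos) hTb1

lemma two_I_ne : (2 * Complex.I) ≠ 0 := by
  simp [Complex.I_ne_zero]

lemma scal1 : Complex.I * (2 * Complex.I)⁻¹ * 2 = 1 := by
  have hI := Complex.I_ne_zero
  field_simp

lemma scal2 : (2 * Complex.I) * (2 * Complex.I)⁻¹ = 1 := mul_inv_cancel₀ two_I_ne

lemma scal3 : Complex.I * (2 * (2 * Complex.I)⁻¹) = 1 := by
  have hI := Complex.I_ne_zero
  field_simp

lemma vecMul_smul_mat (v : Fin n → ℂ) (c : ℂ) (M : Mat) :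
    v ᵥ* (c • M) = c • (v ᵥ* M) := by
  funext j
  simp [Matrix.vecMul, dotProduct, Finset.mul_sum, mul_left_comm]

lemma round_disk {W : Mat} (hs : W.IsSymm) (hp : (1 - W * cm W).PosDef) (z : Fin n → ℂ) :
    ((Complex.I • ((1 + W) * (1 - W)⁻¹) - Complex.I • (1 : Mat)) *
        (Complex.I • ((1 + W) * (1 - W)⁻¹) + Complex.I • (1 : Mat))⁻¹ = W) ∧
    (((2 * Complex.I) • (z ᵥ* (1 - W)⁻¹)) ᵥ*
        (Complex.I • ((1 + W) * (1 - W)⁻¹) + Complex.I • (1 : Mat))⁻¹ = z) := by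
  have hud : IsUnit (1 - W).det :=
    (Matrix.isUnit_iff_isUnit_det _).mp (unit_one_sub hs hp)
  set S := (1 - W)⁻¹ with hSdef
  have hS1 : (1 - W) * S = 1 := Matrix.mul_nonsing_inv _ hud
  have hS2 : S * (1 - W) = 1 := Matrix.nonsing_inv_mul _ hud
  have hinv : (Complex.I • ((1 + W) * S) + Complex.I • (1 : Mat))⁻¹
      = (2 * Complex.I)⁻¹ • (1 - W) := by
    apply Matrix.inv_eq_right_inv
    calc (Complex.I • ((1 + W) * S) + Complex.I • (1 : Mat)) *
          ((2 * Complex.I)⁻¹ • (1 - W))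
        = (Complex.I • ((1 + W) * S + 1)) * ((2 * Complex.I)⁻¹ • (1 - W)) := by
          rw [smul_add]
      _ = (Complex.I * (2 * Complex.I)⁻¹) • (((1 + W) * S + 1) * (1 - W)) := by
          rw [smul_mul_assoc, mul_smul_comm, smul_smul]
      _ = (Complex.I * (2 * Complex.I)⁻¹) • ((1 + W) + (1 - W)) := by
          rw [Matrix.add_mul, Matrix.one_mul, Matrix.mul_assoc, hS2, Matrix.mul_one]
      _ = (Complex.I * (2 * Complex.I)⁻¹) • ((2 : ℂ) • (1 : Mat)) := by
          rw [show (1 + W) + (1 - W) = (2:ℂ) • (1:Mat) from by rw [two_smul]; abel]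
      _ = 1 := by rw [smul_smul, scal1, one_smul]
  constructor
  · have h2' : (1 + W) * S - 1 = ((2:ℂ) • W) * S := by
      have h : ((2:ℂ) • W) * S = (1 + W) * S - (1 - W) * S := by
        rw [← Matrix.sub_mul, show (1 + W) - (1 - W) = (2:ℂ) • W from by
          rw [two_smul]; abel]
      rw [h, hS1]
    have h3 : (((2:ℂ) • W) * S) * (1 - W) = (2:ℂ) • W := by
      rw [smul_mul_assoc, smul_mul_assoc, Matrix.mul_assoc, hS2, Matrix.mul_one]
    calc (Complex.I • ((1 + W) * S) - Complex.I • (1 : Mat)) *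
          (Complex.I • ((1 + W) * S) + Complex.I • (1 : Mat))⁻¹
        = (Complex.I • (((2:ℂ) • W) * S)) * ((2 * Complex.I)⁻¹ • (1 - W)) := by
          rw [hinv, ← smul_sub, h2']
      _ = (Complex.I * (2 * Complex.I)⁻¹) • ((((2:ℂ) • W) * S) * (1 - W)) := by
          rw [smul_mul_assoc, mul_smul_comm, smul_smul]
      _ = (Complex.I * (2 * Complex.I)⁻¹) • ((2:ℂ) • W) := by rw [h3]
      _ = W := by rw [smul_smul, scal1, one_smul]
  · rw [hinv, Matrix.smul_vecMul, vecMul_smul_mat, Matrix.vecMul_vecMul, hS2,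
      Matrix.vecMul_one, smul_smul, scal2, one_smul]

lemma round_half {Ω : Mat} (hs : Ω.IsSymm) (hp : (imM Ω).PosDef) (ζ : Fin n → ℂ) :
    (Complex.I • ((1 + (Ω - Complex.I • (1 : Mat)) * (Ω + Complex.I • (1 : Mat))⁻¹) *
        (1 - (Ω - Complex.I • (1 : Mat)) * (Ω + Complex.I • (1 : Mat))⁻¹)⁻¹) = Ω) ∧
    ((2 * Complex.I) • ((ζ ᵥ* (Ω + Complex.I • (1 : Mat))⁻¹) ᵥ*
        (1 - (Ω - Complex.I • (1 : Mat)) * (Ω + Complex.I • (1 : Mat))⁻¹)⁻¹) = ζ) := by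
  have hud : IsUnit (Ω + Complex.I • (1 : Mat)).det :=
    (Matrix.isUnit_iff_isUnit_det _).mp (unit_add_smul hs hp)
  set P := Ω + Complex.I • (1 : Mat) with hPdef
  set Q := Ω - Complex.I • (1 : Mat) with hQdef
  set T := P⁻¹ with hTdef
  have hT1 : P * T = 1 := Matrix.mul_nonsing_inv _ hud
  have hT2 : T * P = 1 := Matrix.nonsing_inv_mul _ hud
  have hPQ : P - Q = (2 * Complex.I) • (1 : Mat) := by
    rw [hPdef, hQdef]
    module
  have hPQ2 : P + Q = (2:ℂ) • Ω := by
    rw [hPdef, hQdef]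
    module
  have h1mW : (1:Mat) - Q * T = (2 * Complex.I) • T := by
    calc (1:Mat) - Q * T = P * T - Q * T := by rw [hT1]
      _ = (P - Q) * T := (Matrix.sub_mul _ _ _).symm
      _ = (2 * Complex.I) • T := by rw [hPQ, smul_mul_assoc, Matrix.one_mul]
  have hinv' : ((1:Mat) - Q * T)⁻¹ = (2 * Complex.I)⁻¹ • P := by
    apply Matrix.inv_eq_right_inv
    rw [h1mW, smul_mul_assoc, mul_smul_comm, smul_smul, hT2, scal2, one_smul]
  have h1pW : (1:Mat) + Q * T = (2:ℂ) • (Ω * T) := by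
    calc (1:Mat) + Q * T = P * T + Q * T := by rw [hT1]
      _ = (P + Q) * T := (Matrix.add_mul _ _ _).symm
      _ = (2:ℂ) • (Ω * T) := by rw [hPQ2, smul_mul_assoc]
  constructor
  · rw [h1pW, hinv', smul_mul_assoc, mul_smul_comm, smul_smul, smul_smul,
      Matrix.mul_assoc, hT2, Matrix.mul_one]
    rw [show Complex.I * 2 * (2 * Complex.I)⁻¹ = 1 from by
      have hI := Complex.I_ne_zero
      field_simp, one_smul]
  · rw [hinv', vecMul_smul_mat, Matrix.vecMul_vecMul, hT2, Matrix.vecMul_one,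
      smul_smul, scal2, one_smul]

end SiegelAux

/-- The partial Cayley transform is a well-defined bijection from `𝔇_n × ℂⁿ` onto
`ℌ_n × ℂⁿ`, with the indicated inverse; in particular `Ω + iI` is invertible and
`(Ω − iI)(Ω + iI)⁻¹ ∈ 𝔇_n` for `Ω ∈ ℌ_n`, and the two maps are mutually inverse. -/
theorem stmt5 (n : ℕ) :
    (∀ W ∈ SiegelDisk n, IsUnit (1 - W) ∧
      ∀ z : Fin n → ℂ, (cayley (W, z)).1 ∈ SiegelHalf n)
    ∧ (∀ Ω ∈ SiegelHalf n,
        IsUnit (Ω + Complex.I • (1 : Matrix (Fin n) (Fin n) ℂ)) ∧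
        ∀ ζ : Fin n → ℂ, (cayleyInv (Ω, ζ)).1 ∈ SiegelDisk n)
    ∧ (∀ W ∈ SiegelDisk n, ∀ z : Fin n → ℂ, cayleyInv (cayley (W, z)) = (W, z))
    ∧ (∀ Ω ∈ SiegelHalf n, ∀ ζ : Fin n → ℂ, cayley (cayleyInv (Ω, ζ)) = (Ω, ζ)) := by
  refine ⟨?_, ?_, ?_, ?_⟩
  · intro W hW
    obtain ⟨hs, hp⟩ := hW
    exact ⟨SiegelAux.unit_one_sub hs hp, fun z => SiegelAux.half_mem hs hp⟩
  · intro Ω hΩ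
    obtain ⟨hs, hp⟩ := hΩ
    exact ⟨SiegelAux.unit_add_smul hs hp, fun ζ => SiegelAux.disk_mem hs hp⟩
  · intro W hW z
    obtain ⟨hs, hp⟩ := hW
    have h := SiegelAux.round_disk hs hp z
    exact Prod.ext h.1 h.2
  · intro Ω hΩ ζ
    obtain ⟨hs, hp⟩ := hΩ
    have h := SiegelAux.round_half hs hp ζ
    exact Prod.ext h.1 h.2
end
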